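/- arXiv:1207.1705 — 5 statements merged into one kernel-verified Lean document; each statement's English description precedes it below -/
import Mathlib

section
/- Let C be a univalent updown category. For objects p, q with |q| − |p| = n > 0, the multiplicity u(p;q) = d(p;q) equals the number of strings (h_1, ..., h_n) of morphisms, each between adjacent ranks, whose composite h_n ∘ h_{n−1} ∘ ... ∘ h_1 is a morphism from p to q. -/
structure UDData where
  Obj : Type
  Hom : Obj → Obj → Type
  idm : ∀ p, Hom p p
  comp : ∀ {p q r : Obj}, Hom p q → Hom q r → Hom p r
  idm_comp : ∀ {p q : Obj} (f : Hom p q), comp (idm p) f = f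
  comp_idm : ∀ {p q : Obj} (f : Hom p q), comp f (idm q) = f
  comp_assoc : ∀ {p q r s : Obj} (f : Hom p q) (g : Hom q r) (h : Hom r s),
    comp (comp f g) h = comp f (comp g h)
  rank : Obj → ℕ
  zhat : Obj

namespace UDData

def cast {C : UDData} {p q q' : C.Obj} (h : q = q') (f : C.Hom p q) : C.Hom p q' := h ▸ f

def Chain (C : UDData) : ℕ → C.Obj → C.Obj → Type
  | 0, p, q => PLift (p = q)
  | n + 1, p, q => (r : C.Obj) × C.Chain n p r × {f : C.Hom r q // C.rank q = C.rank r + 1}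

structure IsUpdown (C : UDData) : Prop where
  rank_finite : ∀ n : ℕ, {p : C.Obj | C.rank p = n}.Finite
  hom_finite : ∀ p q : C.Obj, Finite (C.Hom p q)
  rank_zhat : C.rank C.zhat = 0
  zhat_unique : ∀ p : C.Obj, C.rank p = 0 → p = C.zhat
  from_zhat : ∀ p : C.Obj, Nonempty (C.Hom C.zhat p)
  hom_rank : ∀ p q : C.Obj, Nonempty (C.Hom p q) → C.rank p < C.rank q ∨ p = q
  aut_inv : ∀ (p : C.Obj) (f : C.Hom p p),
    ∃ g : C.Hom p p, C.comp f g = C.idm p ∧ C.comp g f = C.idm p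
  factor : ∀ {p q : C.Obj} (f : C.Hom p q), C.rank p < C.rank q →
    ∃ (r : C.Obj) (g : C.Hom p r) (h : C.Hom r q),
      C.rank r = C.rank p + 1 ∧ C.comp g h = f
  pre_free : ∀ {p q : C.Obj}, C.rank q = C.rank p + 1 → ∀ (a : C.Hom p p) (f : C.Hom p q),
    C.comp a f = f → a = C.idm p
  post_free : ∀ {p q : C.Obj}, C.rank q = C.rank p + 1 → ∀ (b : C.Hom q q) (f : C.Hom p q),
    C.comp f b = f → b = C.idm q

variable (C : UDData)

noncomputable def nAut (p : C.Obj) : ℕ := Nat.card (C.Hom p p)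

noncomputable def u (p q : C.Obj) : ℕ := Nat.card (C.Hom p q) / C.nAut q

noncomputable def d (p q : C.Obj) : ℕ := Nat.card (C.Hom p q) / C.nAut p

noncomputable def uStep (p q : C.Obj) : ℕ := if C.rank q = C.rank p + 1 then C.u p q else 0

noncomputable def dStep (p q : C.Obj) : ℕ := if C.rank q = C.rank p + 1 then C.d p q else 0

open Classical in
noncomputable def uext (C : UDData) : ℕ → C.Obj → C.Obj → ℕ
  | 0, p, q => if p = q then 1 else 0
  | n + 1, p, q => ∑ᶠ r : C.Obj, C.uext n p r * C.uStep r q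

open Classical in
noncomputable def dext (C : UDData) : ℕ → C.Obj → C.Obj → ℕ
  | 0, p, q => if p = q then 1 else 0
  | n + 1, p, q => ∑ᶠ r : C.Obj, C.dext n p r * C.dStep r q

noncomputable def uE (p q : C.Obj) : ℕ := C.uext (C.rank q - C.rank p) p q

noncomputable def dE (p q : C.Obj) : ℕ := C.dext (C.rank q - C.rank p) p q

def Univalent (C : UDData) : Prop := ∀ p : C.Obj, Subsingleton (C.Hom p p)

def Simple (C : UDData) : Prop :=
  (∀ p q : C.Obj, Subsingleton (C.Hom p q)) ∧
    ∀ (n : ℕ) (p q : C.Obj), Subsingleton (C.Chain n p q)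

def EUC (C : UDData) (u : ℕ → ℕ) : Prop :=
  ∀ p : C.Obj, (∑ᶠ q : C.Obj, C.uStep p q) = u (C.rank p)

def EDC (C : UDData) (d : ℕ → ℕ) : Prop :=
  ∀ p : C.Obj, (∑ᶠ q : C.Obj, C.dStep q p) = d (C.rank p)

def Factorial (C : UDData) : Prop :=
  ∀ p : C.Obj, (∑ᶠ q : C.Obj, C.dStep q p) = C.rank p

def prod (C D : UDData) : UDData where
  Obj := C.Obj × D.Obj
  Hom := fun p q => C.Hom p.1 q.1 × D.Hom p.2 q.2
  idm := fun p => (C.idm p.1, D.idm p.2)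
  comp := fun f g => (C.comp f.1 g.1, D.comp f.2 g.2)
  idm_comp := by intro p q f; cases f; simp [C.idm_comp, D.idm_comp]
  comp_idm := by intro p q f; cases f; simp [C.comp_idm, D.comp_idm]
  comp_assoc := by intro p q r s f g h; simp [C.comp_assoc, D.comp_assoc]
  rank := fun p => C.rank p.1 + D.rank p.2
  zhat := (C.zhat, D.zhat)

structure Mor (C D : UDData) where
  obj : C.Obj → D.Obj
  map : ∀ {p q : C.Obj}, C.Hom p q → D.Hom (obj p) (obj q)
  map_idm : ∀ p : C.Obj, map (C.idm p) = D.idm (obj p)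
  map_comp : ∀ {p q r : C.Obj} (f : C.Hom p q) (g : C.Hom q r),
    map (C.comp f g) = D.comp (map f) (map g)
  rank_eq : ∀ p : C.Obj, D.rank (obj p) = C.rank p

def Mor.comp {C D E : UDData} (F : Mor C D) (G : Mor D E) : Mor C E where
  obj := fun p => G.obj (F.obj p)
  map := fun f => G.map (F.map f)
  map_idm := by intro p; show G.map (F.map (C.idm p)) = _; rw [F.map_idm, G.map_idm]
  map_comp := by
    intro p q r f g
    show G.map (F.map (C.comp f g)) = E.comp (G.map (F.map f)) (G.map (F.map g))
    rw [F.map_comp, G.map_comp]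
  rank_eq := by intro p; rw [G.rank_eq, F.rank_eq]

structure Mor.IsGood {C D : UDData} (F : Mor C D) : Prop where
  aut_inj : ∀ p : C.Obj, Function.Injective fun a : C.Hom p p => F.map a
  pre_quot_inj : ∀ {p q₁ q₂ : C.Obj} (f₁ : C.Hom p q₁) (f₂ : C.Hom p q₂),
    C.rank q₁ = C.rank p + 1 → C.rank q₂ = C.rank p + 1 →
    ∀ h : F.obj q₁ = F.obj q₂,
      (∃ a : D.Hom (F.obj p) (F.obj p),
        D.comp a (UDData.cast h (F.map f₁)) = F.map f₂) →
      ∃ e : q₁ = q₂, ∃ a : C.Hom p p, C.comp a (UDData.cast e f₁) = f₂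
  post_quot_inj : ∀ {p q₁ q₂ : C.Obj} (f₁ : C.Hom p q₁) (f₂ : C.Hom p q₂),
    C.rank q₁ = C.rank p + 1 → C.rank q₂ = C.rank p + 1 →
    ∀ h : F.obj q₁ = F.obj q₂,
      (∃ b : D.Hom (F.obj q₂) (F.obj q₂),
        D.comp (UDData.cast h (F.map f₁)) b = F.map f₂) →
      ∃ e : q₁ = q₂, ∃ b : C.Hom q₂ q₂, C.comp (UDData.cast e f₁) b = f₂

def Mor.IsCovering {C' C : UDData} (F : Mor C' C) : Prop :=
  Function.Surjective F.obj ∧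
    ∀ p q : C'.Obj, C'.rank q = C'.rank p + 1 →
      Function.Bijective fun x : (q' : {q' : C'.Obj // F.obj q' = F.obj q}) × C'.Hom p q'.1 =>
        UDData.cast x.1.2 (F.map x.2)

noncomputable def objCoeff (n : ℕ) : ℚ :=
  ∑ᶠ p : C.Obj, if C.rank p = n then ((C.nAut p : ℚ))⁻¹ else 0

noncomputable def objGF : PowerSeries ℚ := PowerSeries.mk C.objCoeff

noncomputable def morGF : PowerSeries ℚ :=
  PowerSeries.mk fun n =>
    ∑ᶠ p : C.Obj, ∑ᶠ q : C.Obj,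
      if C.rank p + C.rank q = n then (C.uStep p q : ℚ) * ((C.nAut p : ℚ))⁻¹ else 0

noncomputable def sqSub (f : PowerSeries ℚ) : PowerSeries ℚ :=
  PowerSeries.mk fun n => if 2 ∣ n then PowerSeries.coeff (n / 2) f else 0

noncomputable def coverCard (n : ℕ) : ℕ := Nat.card ((q : C.Obj) × C.Chain n C.zhat q)

noncomputable def inprod (f g : C.Obj → ℚ) : ℚ := ∑ᶠ p : C.Obj, f p * g p * C.nAut p

noncomputable def Uop (f : C.Obj → ℚ) : C.Obj → ℚ := fun q => ∑ᶠ p : C.Obj, f p * C.uStep p q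

noncomputable def Dop (f : C.Obj → ℚ) : C.Obj → ℚ := fun p => ∑ᶠ q : C.Obj, f q * C.dStep p q

end UDData
namespace UnivProof

open UDData

variable {C : UDData}

def chainEquiv (C : UDData) (n : ℕ) (p q : C.Obj) :
    C.Chain (n + 1) p q ≃
      (r : {r : C.Obj // C.rank q = C.rank r + 1}) × (C.Chain n p r.1 × C.Hom r.1 q) where
  toFun x := ⟨⟨x.1, x.2.2.2⟩, x.2.1, x.2.2.1⟩
  invFun y := ⟨y.1.1, y.2.1, y.2.2, y.1.2⟩
  left_inv x := rfl
  right_inv y := rfl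

lemma stepSet_finite (h : C.IsUpdown) (q : C.Obj) :
    {r : C.Obj | C.rank q = C.rank r + 1}.Finite :=
  (h.rank_finite (C.rank q - 1)).subset (fun r hr => by simp only [Set.mem_setOf_eq] at *; omega)

lemma chain_finite (h : C.IsUpdown) : ∀ (n : ℕ) (p q : C.Obj), Finite (C.Chain n p q)
  | 0, p, q => by
    show Finite (PLift (p = q)); infer_instance
  | n + 1, p, q => by
    haveI : ∀ r : C.Obj, Finite (C.Chain n p r) := chain_finite h n p
    haveI : ∀ r : C.Obj, Finite (C.Hom r q) := fun r => h.hom_finite r q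
    haveI : Finite {r : C.Obj // C.rank q = C.rank r + 1} := (stepSet_finite h q).to_subtype
    exact Finite.of_equiv _ (chainEquiv C n p q).symm

lemma nAut_eq_one (hu : C.Univalent) (q : C.Obj) : C.nAut q = 1 :=
  Nat.card_eq_one_iff_unique.mpr ⟨hu q, ⟨C.idm q⟩⟩

lemma card_sigma_nat {ι : Type*} [Fintype ι] (α : ι → Type*) [∀ i, Finite (α i)] :
    Nat.card ((i : ι) × α i) = ∑ i, Nat.card (α i) := by
  haveI := fun i => Fintype.ofFinite (α i)
  simp [Nat.card_eq_fintype_card, Fintype.card_sigma]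

lemma uext_card (h : C.IsUpdown) (hu : C.Univalent) :
    ∀ (n : ℕ) (p q : C.Obj), C.uext n p q = Nat.card (C.Chain n p q)
  | 0, p, q => by
    by_cases hpq : p = q
    · subst hpq
      have h1 : Nat.card (PLift (p = p)) = 1 :=
        Nat.card_eq_one_iff_unique.mpr ⟨inferInstance, ⟨⟨rfl⟩⟩⟩
      rw [show C.Chain 0 p p = PLift (p = p) from rfl] at *
      simp [uext, h1]
    · haveI : IsEmpty (PLift (p = q)) := ⟨fun c => hpq c.down⟩
      rw [show C.Chain 0 p q = PLift (p = q) from rfl] at *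
      simp [uext, hpq]
  | n + 1, p, q => by
    classical
    have hS : {r : C.Obj | C.rank q = C.rank r + 1}.Finite := stepSet_finite h q
    haveI : ∀ r : C.Obj, Finite (C.Chain n p r) := chain_finite h n p
    haveI : ∀ r : C.Obj, Finite (C.Hom r q) := fun r => h.hom_finite r q
    haveI : Finite {r : C.Obj // C.rank q = C.rank r + 1} := hS.to_subtype
    haveI : Fintype {r : C.Obj // C.rank q = C.rank r + 1} := Fintype.ofFinite _
    have hL : C.uext (n + 1) p q = ∑ᶠ r : C.Obj, C.uext n p r * C.uStep r q := rfl
    have hsupp : (Function.support fun r : C.Obj => C.uext n p r * C.uStep r q)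
        ⊆ ↑hS.toFinset := by
      intro r hr
      simp only [Function.mem_support] at hr
      simp only [Finset.coe_sort_coe, Set.Finite.coe_toFinset, Set.mem_setOf_eq]
      by_contra hc
      simp [uStep, hc] at hr
    rw [hL, finsum_eq_sum_of_support_subset _ hsupp,
      Nat.card_congr (chainEquiv C n p q), card_sigma_nat]
    rw [Finset.sum_subtype (p := fun r => C.rank q = C.rank r + 1) hS.toFinset
      (fun r => by simp [Set.Finite.mem_toFinset]) fun r => C.uext n p r * C.uStep r q]
    apply Finset.sum_congr rfl
    intro r _
    rw [Nat.card_prod, uext_card h hu n p r.1]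
    congr 1
    rw [uStep, if_pos r.2, u, nAut_eq_one hu, Nat.div_one]

lemma dext_eq_uext (hu : C.Univalent) :
    ∀ (n : ℕ) (p q : C.Obj), C.dext n p q = C.uext n p q
  | 0, p, q => rfl
  | n + 1, p, q => by
    show (∑ᶠ r : C.Obj, C.dext n p r * C.dStep r q) = ∑ᶠ r : C.Obj, C.uext n p r * C.uStep r q
    apply finsum_congr
    intro r
    rw [dext_eq_uext hu n p r]
    congr 1
    unfold dStep uStep d u
    rw [nAut_eq_one hu, nAut_eq_one hu]

end UnivProof

theorem univalent_mult_counts_chains (C : UDData) (h : C.IsUpdown) (hu : C.Univalent)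
    (p q : C.Obj) (n : ℕ) (hn : 0 < n) (hr : C.rank q = C.rank p + n) :
    C.uE p q = Nat.card (C.Chain n p q) ∧ C.dE p q = Nat.card (C.Chain n p q) := by
  have hrn : C.rank q - C.rank p = n := by omega
  constructor
  · rw [UDData.uE, hrn, UnivProof.uext_card h hu]
  · rw [UDData.dE, hrn, UnivProof.dext_eq_uext hu, UnivProof.uext_card h hu]
end

section
/- If an updown category C is evenly down-covered with sequence {d_n}, then for every object c of rank n, d(0̂;c) = d_n·d_{n−1}·...·d_1. In particular, if C is factorial then d(0̂;c) = n! for every c of rank n. -/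
lemma dStep_support_finite (C : UDData) (h : C.IsUpdown) (c : C.Obj) :
    (Function.support fun r => C.dStep r c).Finite := by
  apply Set.Finite.subset (h.rank_finite (C.rank c - 1))
  intro r hr
  simp only [Function.mem_support, UDData.dStep] at hr
  split at hr
  · next hrank => simp [Set.mem_setOf_eq, hrank]
  · exact absurd rfl hr

lemma rank_of_dext_ne_zero (C : UDData) :
    ∀ (n : ℕ) (p q : C.Obj), C.dext n p q ≠ 0 → C.rank q = C.rank p + n := by
  intro n
  induction n with
  | zero =>
    intro p q hne
    simp only [UDData.dext] at hne
    split at hne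
    · next e => subst e; simp
    · exact absurd rfl hne
  | succ n ih =>
    intro p q hne
    simp only [UDData.dext] at hne
    have : ∃ r, C.dext n p r * C.dStep r q ≠ 0 := by
      by_contra hall
      push_neg at hall
      simp [finsum_congr hall] at hne
    obtain ⟨r, hr⟩ := this
    have h1 : C.dext n p r ≠ 0 := fun h0 => hr (by simp [h0])
    have h2 : C.dStep r q ≠ 0 := fun h0 => hr (by simp [h0])
    have hrank : C.rank q = C.rank r + 1 := by
      simp only [UDData.dStep] at h2
      split at h2
      · assumption
      · exact absurd rfl h2
    rw [hrank, ih p r h1]; omega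

lemma dext_zhat (C : UDData) (h : C.IsUpdown) (d : ℕ → ℕ) (hd : C.EDC d) :
    ∀ (n : ℕ) (c : C.Obj), C.rank c = n →
      C.dext n C.zhat c = ∏ i ∈ Finset.range n, d (i + 1) := by
  intro n
  induction n with
  | zero =>
    intro c hc
    have := h.zhat_unique c hc
    subst this
    simp [UDData.dext]
  | succ n ih =>
    intro c hc
    simp only [UDData.dext]
    have key : ∀ r : C.Obj,
        C.dext n C.zhat r * C.dStep r c
          = (∏ i ∈ Finset.range n, d (i + 1)) * C.dStep r c := by
      intro r
      by_cases h2 : C.dStep r c = 0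
      · simp [h2]
      · have hrank : C.rank c = C.rank r + 1 := by
          simp only [UDData.dStep] at h2
          split at h2
          · assumption
          · exact absurd rfl h2
        have hr : C.rank r = n := by omega
        rw [ih r hr]
    rw [finsum_congr key, ← mul_finsum _ _, hd c, hc,
      Finset.prod_range_succ]

theorem evenly_downcovered_dE (C : UDData) (h : C.IsUpdown) (d : ℕ → ℕ) (hd : C.EDC d) :
    (∀ c : C.Obj, C.dE C.zhat c = ∏ i ∈ Finset.range (C.rank c), d (i + 1)) ∧
    (C.Factorial → ∀ c : C.Obj, C.dE C.zhat c = (C.rank c).factorial) := by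
  have main : ∀ (d : ℕ → ℕ), C.EDC d → ∀ c : C.Obj,
      C.dE C.zhat c = ∏ i ∈ Finset.range (C.rank c), d (i + 1) := by
    intro d hd c
    have : C.rank c - C.rank C.zhat = C.rank c := by rw [h.rank_zhat]; omega
    rw [UDData.dE, this]
    exact dext_zhat C h d hd (C.rank c) c rfl
  refine ⟨main d hd, fun hf c => ?_⟩
  rw [main (fun n => n) hf c, ← Finset.prod_range_add_one_eq_factorial]
end

section
/- If an updown category C is evenly up-covered with sequence {u_n} and evenly down-covered with sequence {d_n}, then the coefficients a_n of its object generating function satisfy a_n·u_n = a_{n+1}·d_{n+1} for all n ≥ 0. In particular, if C is evenly up-covered and factorial with Aut(0̂) trivial, then a_n = u_0·u_1·...·u_{n−1}/n! for n ≥ 1. -/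
namespace UDAux

open UDData

variable {C : UDData}

lemma nAut_pos (h : C.IsUpdown) (p : C.Obj) : 0 < C.nAut p := by
  haveI := h.hom_finite p p
  haveI : Nonempty (C.Hom p p) := ⟨C.idm p⟩
  exact Nat.card_pos

lemma right_cancel (h : C.IsUpdown) {p q : C.Obj} (hr : C.rank q = C.rank p + 1)
    (f : C.Hom p q) {b b' : C.Hom q q} (hbb : C.comp f b = C.comp f b') : b = b' := by
  obtain ⟨g, hg1, hg2⟩ := h.aut_inv q b'
  have h1 : C.comp f (C.comp b g) = f := by
    rw [← C.comp_assoc, hbb, C.comp_assoc, hg1, C.comp_idm]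
  have h2 := h.post_free hr _ f h1
  calc b = C.comp b (C.comp g b') := by rw [hg2, C.comp_idm]
    _ = C.comp (C.comp b g) b' := (C.comp_assoc _ _ _).symm
    _ = b' := by rw [h2, C.idm_comp]

lemma left_cancel (h : C.IsUpdown) {p q : C.Obj} (hr : C.rank q = C.rank p + 1)
    (f : C.Hom p q) {a a' : C.Hom p p} (haa : C.comp a f = C.comp a' f) : a = a' := by
  obtain ⟨g, hg1, hg2⟩ := h.aut_inv p a'
  have h1 : C.comp (C.comp g a) f = f := by
    rw [C.comp_assoc, haa, ← C.comp_assoc, hg2, C.idm_comp]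
  have h2 := h.pre_free hr _ f h1
  calc a = C.comp (C.comp a' g) a := by rw [hg1, C.idm_comp]
    _ = C.comp a' (C.comp g a) := C.comp_assoc _ _ _
    _ = a' := by rw [h2, C.comp_idm]

lemma card_hom_right (h : C.IsUpdown) {p q : C.Obj} (hr : C.rank q = C.rank p + 1) :
    ∃ k, Nat.card (C.Hom p q) = k * C.nAut q := by
  classical
  let s : Setoid (C.Hom p q) :=
    ⟨fun f g => ∃ b, C.comp f b = g, by
      constructor
      · exact fun f => ⟨C.idm q, C.comp_idm f⟩
      · rintro f g ⟨b, rfl⟩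
        obtain ⟨b', hb1, hb2⟩ := h.aut_inv q b
        exact ⟨b', by rw [C.comp_assoc, hb1, C.comp_idm]⟩
      · rintro f g k ⟨b, rfl⟩ ⟨b', rfl⟩
        exact ⟨C.comp b b', (C.comp_assoc _ _ _).symm⟩⟩
  refine ⟨Nat.card (Quotient s), ?_⟩
  have e : Quotient s × C.Hom q q ≃ C.Hom p q := by
    refine Equiv.ofBijective (fun x => C.comp x.1.out x.2) ⟨?_, ?_⟩
    · rintro ⟨c, b⟩ ⟨c', b'⟩ hx
      simp only at hx
      have hcc : c = c' := by
        rw [← Quotient.out_eq c, ← Quotient.out_eq c']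
        obtain ⟨g, hg1, hg2⟩ := h.aut_inv q b'
        refine Quotient.sound ⟨C.comp b g, ?_⟩
        rw [← C.comp_assoc, hx, C.comp_assoc, hg1, C.comp_idm]
      subst hcc
      have hb : b = b' := right_cancel h hr _ hx
      rw [hb]
    · intro g
      obtain ⟨b, hb⟩ := Quotient.exact (Quotient.out_eq (Quotient.mk s g))
      exact ⟨⟨Quotient.mk s g, b⟩, hb⟩
  rw [← Nat.card_congr e, Nat.card_prod]
  rfl

lemma card_hom_left (h : C.IsUpdown) {p q : C.Obj} (hr : C.rank q = C.rank p + 1) :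
    ∃ k, Nat.card (C.Hom p q) = k * C.nAut p := by
  classical
  let s : Setoid (C.Hom p q) :=
    ⟨fun f g => ∃ a, C.comp a f = g, by
      constructor
      · exact fun f => ⟨C.idm p, C.idm_comp f⟩
      · rintro f g ⟨a, rfl⟩
        obtain ⟨a', ha1, ha2⟩ := h.aut_inv p a
        exact ⟨a', by rw [← C.comp_assoc, ha2, C.idm_comp]⟩
      · rintro f g k ⟨a, rfl⟩ ⟨a', rfl⟩
        exact ⟨C.comp a' a, C.comp_assoc _ _ _⟩⟩
  refine ⟨Nat.card (Quotient s), ?_⟩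
  have e : Quotient s × C.Hom p p ≃ C.Hom p q := by
    refine Equiv.ofBijective (fun x => C.comp x.2 x.1.out) ⟨?_, ?_⟩
    · rintro ⟨c, a⟩ ⟨c', a'⟩ hx
      simp only at hx
      have hcc : c = c' := by
        rw [← Quotient.out_eq c, ← Quotient.out_eq c']
        obtain ⟨g, hg1, hg2⟩ := h.aut_inv p a'
        refine Quotient.sound ⟨C.comp g a, ?_⟩
        rw [C.comp_assoc, hx, ← C.comp_assoc, hg2, C.idm_comp]
      subst hcc
      have ha : a = a' := left_cancel h hr _ hx
      rw [ha]
    · intro g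
      obtain ⟨a, ha⟩ := Quotient.exact (Quotient.out_eq (Quotient.mk s g))
      exact ⟨⟨Quotient.mk s g, a⟩, ha⟩
  rw [← Nat.card_congr e, Nat.card_prod]
  rfl

lemma key (h : C.IsUpdown) (p q : C.Obj) :
    (C.uStep p q : ℚ) * (C.nAut p : ℚ)⁻¹ = (C.dStep p q : ℚ) * (C.nAut q : ℚ)⁻¹ := by
  unfold UDData.uStep UDData.dStep
  by_cases hr : C.rank q = C.rank p + 1
  · simp only [if_pos hr]
    obtain ⟨k, hk⟩ := card_hom_right h hr
    obtain ⟨k', hk'⟩ := card_hom_left h hr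
    have hcu : C.u p q = k := by
      unfold UDData.u; rw [hk]; exact Nat.mul_div_cancel _ (nAut_pos h q)
    have hcd : C.d p q = k' := by
      unfold UDData.d; rw [hk']; exact Nat.mul_div_cancel _ (nAut_pos h p)
    rw [hcu, hcd]
    have hkk : (k : ℚ) * (C.nAut q : ℚ) = (k' : ℚ) * (C.nAut p : ℚ) := by
      exact_mod_cast (hk.symm.trans hk')
    have hp0 : (C.nAut p : ℚ) ≠ 0 := Nat.cast_ne_zero.mpr (nAut_pos h p).ne'
    have hq0 : (C.nAut q : ℚ) ≠ 0 := Nat.cast_ne_zero.mpr (nAut_pos h q).ne'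
    field_simp
    linear_combination hkk
  · simp [hr]

lemma objCoeff_eq (h : C.IsUpdown) (n : ℕ) :
    C.objCoeff n = ∑ p ∈ (h.rank_finite n).toFinset, (C.nAut p : ℚ)⁻¹ := by
  rw [UDData.objCoeff,
    finsum_eq_sum_of_support_subset _ (s := (h.rank_finite n).toFinset) (by
      intro p hp
      simp only [Function.mem_support, ne_eq, ite_eq_right_iff, not_forall] at hp
      simpa using hp.1)]
  refine Finset.sum_congr rfl fun p hp => ?_
  rw [if_pos (by simpa using hp)]

end UDAux

theorem evenly_covered_coeff_relation (C : UDData) (h : C.IsUpdown) (u d : ℕ → ℕ)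
    (hu : C.EUC u) (hd : C.EDC d) :
    (∀ n : ℕ, C.objCoeff n * u n = C.objCoeff (n + 1) * d (n + 1)) ∧
    (C.Factorial → Subsingleton (C.Hom C.zhat C.zhat) → ∀ n : ℕ, 1 ≤ n →
      C.objCoeff n = (∏ i ∈ Finset.range n, (u i : ℚ)) / (n.factorial : ℚ)) := by
  classical
  have main : ∀ d' : ℕ → ℕ, C.EDC d' → ∀ n : ℕ,
      C.objCoeff n * u n = C.objCoeff (n + 1) * d' (n + 1) := by
    intro d' hd' n
    set A : Finset C.Obj := (h.rank_finite n).toFinset with hA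
    set B : Finset C.Obj := (h.rank_finite (n+1)).toFinset with hB
    have hAm : ∀ p, p ∈ A ↔ C.rank p = n := by intro p; simp [hA]
    have hBm : ∀ q, q ∈ B ↔ C.rank q = n + 1 := by intro q; simp [hB]
    have hrow : ∀ p ∈ A, (u n : ℚ) = ∑ q ∈ B, (C.uStep p q : ℚ) := by
      intro p hp
      have h1 : (∑ᶠ q : C.Obj, C.uStep p q) = u n := by
        rw [hu p, (hAm p).mp hp]
      rw [← h1, finsum_eq_sum_of_support_subset _ (s := B) (by
        intro q hq
        simp only [Function.mem_support, UDData.uStep, ne_eq, ite_eq_right_iff,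
          not_forall] at hq
        simp only [Finset.mem_coe]
        rw [hBm, hq.1, (hAm p).mp hp])]
      push_cast
      rfl
    have hcol : ∀ q ∈ B, (d' (n+1) : ℚ) = ∑ p ∈ A, (C.dStep p q : ℚ) := by
      intro q hq
      have h1 : (∑ᶠ p : C.Obj, C.dStep p q) = d' (n+1) := by
        rw [hd' q, (hBm q).mp hq]
      rw [← h1, finsum_eq_sum_of_support_subset _ (s := A) (by
        intro p hp
        simp only [Function.mem_support, UDData.dStep, ne_eq, ite_eq_right_iff,
          not_forall] at hp
        simp only [Finset.mem_coe]
        rw [hAm]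
        have h2 := hp.1
        have h3 := (hBm q).mp hq
        omega)]
      push_cast
      rfl
    calc C.objCoeff n * u n
        = ∑ p ∈ A, (C.nAut p : ℚ)⁻¹ * (u n : ℚ) := by
          rw [UDAux.objCoeff_eq h n, Finset.sum_mul]
      _ = ∑ p ∈ A, ∑ q ∈ B, (C.uStep p q : ℚ) * (C.nAut p : ℚ)⁻¹ := by
          refine Finset.sum_congr rfl fun p hp => ?_
          rw [hrow p hp, Finset.mul_sum]
          exact Finset.sum_congr rfl fun q _ => mul_comm _ _
      _ = ∑ q ∈ B, ∑ p ∈ A, (C.dStep p q : ℚ) * (C.nAut q : ℚ)⁻¹ := by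
          rw [Finset.sum_comm]
          exact Finset.sum_congr rfl fun q _ =>
            Finset.sum_congr rfl fun p _ => UDAux.key h p q
      _ = ∑ q ∈ B, (C.nAut q : ℚ)⁻¹ * (d' (n+1) : ℚ) := by
          refine Finset.sum_congr rfl fun q hq => ?_
          rw [hcol q hq, Finset.mul_sum]
          exact Finset.sum_congr rfl fun p _ => mul_comm _ _
      _ = C.objCoeff (n+1) * d' (n+1) := by
          rw [UDAux.objCoeff_eq h (n+1), Finset.sum_mul]
  refine ⟨main d hd, ?_⟩
  intro hfac hsub
  have hmain : ∀ n : ℕ, C.objCoeff n * u n = C.objCoeff (n + 1) * (n + 1) := by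
    intro n
    have := main (fun k => k) hfac n
    push_cast at this ⊢
    exact this
  have h0 : C.objCoeff 0 = 1 := by
    rw [UDAux.objCoeff_eq h 0]
    have hA0 : (h.rank_finite 0).toFinset = {C.zhat} := by
      ext p
      simp only [Set.Finite.mem_toFinset, Set.mem_setOf_eq, Finset.mem_singleton]
      constructor
      · exact h.zhat_unique p
      · rintro rfl; exact h.rank_zhat
    rw [hA0, Finset.sum_singleton]
    have : C.nAut C.zhat = 1 :=
      Nat.card_eq_one_iff_unique.mpr ⟨hsub, ⟨C.idm C.zhat⟩⟩
    rw [this]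
    norm_num
  have key : ∀ n : ℕ, C.objCoeff (n + 1)
      = (∏ i ∈ Finset.range (n+1), (u i : ℚ)) / ((n+1).factorial : ℚ) := by
    intro n
    induction n with
    | zero =>
      have := hmain 0
      rw [h0, one_mul] at this
      simp only [zero_add] at this ⊢
      rw [Finset.prod_range_one]
      simp only [Nat.factorial_one, Nat.cast_one, div_one]
      have h1 : ((0:ℕ) + 1 : ℚ) = 1 := by norm_num
      rw [show ((0:ℕ):ℚ) + 1 = 1 by norm_num, mul_one] at this
      exact this.symm
    | succ m ih =>
      have hrec := hmain (m + 1)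
      rw [ih] at hrec
      have hne : ((m:ℚ) + 1 + 1) ≠ 0 := by positivity
      have hfne : (((m+1).factorial : ℕ) : ℚ) ≠ 0 := by
        exact_mod_cast (Nat.factorial_pos (m+1)).ne'
      have hthis : C.objCoeff (m + 1 + 1)
          = (∏ i ∈ Finset.range (m+1), (u i : ℚ)) / ((m+1).factorial : ℚ)
            * (u (m+1) : ℚ) / ((m:ℚ) + 1 + 1) := by
        rw [eq_div_iff hne]
        push_cast at hrec
        linarith [hrec]
      have h2 : (((m+1+1).factorial : ℕ) : ℚ) = ((m:ℚ)+1+1) * (((m+1).factorial : ℕ) : ℚ) := by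
        rw [Nat.factorial_succ]
        push_cast
        ring
      rw [hthis, Finset.prod_range_succ, h2, div_mul_eq_mul_div, div_div,
        mul_comm (((m+1).factorial : ℕ) : ℚ) ((m:ℚ)+1+1),
        Finset.prod_range_succ, Finset.prod_range_succ]
  intro n hn
  obtain ⟨m, rfl⟩ := Nat.exists_eq_add_of_le hn
  rw [add_comm 1 m]
  exact key m
end

section
/- For the universal cover π: C̃ → C of a univalent updown category C, the fiber over any object p of rank n has exactly u(0̂;p) elements; hence |C̃_n| = Σ_{p of rank n} u(0̂;p). In particular, if C is factorial, then |π^{-1}(p)| = n! and |C̃_n| = n!·|C_n|, and if C is evenly up-covered with sequence {u_n}, then |C̃_n| = u_0·u_1·...·u_{n−1}. -/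
section Helpers

open Function

lemma my_card_sigma_finsum {ι : Type*} (F : ι → Type*) [∀ i, Finite (F i)]
    (hS : {i | Nonempty (F i)}.Finite) :
    Nat.card ((i : ι) × F i) = ∑ᶠ i, Nat.card (F i) := by
  classical
  set s : Finset ι := hS.toFinset with hs
  have e : ((i : ι) × F i) ≃ ((i : s) × F i.1) :=
    { toFun := fun x => ⟨⟨x.1, by simp [hs, Set.Finite.mem_toFinset]; exact ⟨x.2⟩⟩, x.2⟩
      invFun := fun x => ⟨x.1.1, x.2⟩
      left_inv := fun x => rfl
      right_inv := fun x => rfl }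
  haveI : ∀ i, Fintype (F i) := fun i => Fintype.ofFinite _
  rw [Nat.card_congr e, Nat.card_eq_fintype_card, Fintype.card_sigma]
  have h1 : (∑ i : s, Fintype.card (F i.1)) = ∑ i ∈ s, Nat.card (F i) := by
    rw [← Finset.sum_coe_sort s (fun i => Nat.card (F i))]
    exact Finset.sum_congr rfl fun i _ => (Nat.card_eq_fintype_card).symm
  rw [h1]
  refine (finsum_eq_finset_sum_of_support_subset _ ?_).symm
  intro i hi
  simp only [mem_support] at hi
  have : Nonempty (F i) := Nat.card_ne_zero.mp hi |>.1
  simp [hs, Set.Finite.mem_toFinset]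
  exact this

lemma my_finite_sigma {ι : Type*} (F : ι → Type*) [∀ i, Finite (F i)]
    (hS : {i | Nonempty (F i)}.Finite) : Finite ((i : ι) × F i) := by
  haveI : Finite ({i | Nonempty (F i)} : Set ι) := hS
  have e : ((i : ι) × F i) ≃ ((i : {i | Nonempty (F i)}) × F i.1) :=
    { toFun := fun x => ⟨⟨x.1, ⟨x.2⟩⟩, x.2⟩
      invFun := fun x => ⟨x.1.1, x.2⟩
      left_inv := fun x => rfl
      right_inv := fun x => rfl }
  exact Finite.of_equiv _ e.symm

open Classical in
lemma my_card_subtype_prop {α : Type*} (P : Prop) :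
    Nat.card {_f : α // P} = if P then Nat.card α else 0 := by
  split
  · next hP => exact Nat.card_congr (Equiv.subtypeUnivEquiv fun _ => hP)
  · next hP =>
    haveI : IsEmpty {_f : α // P} := ⟨fun x => hP x.2⟩
    simp

open Classical in
lemma my_card_plift_eq {α : Type*} (p q : α) :
    Nat.card (PLift (p = q)) = if p = q then 1 else 0 := by
  split
  · next hP => haveI : Unique (PLift (p = q)) := ⟨⟨⟨hP⟩⟩, fun x => rfl⟩; simp
  · next hP => haveI : IsEmpty (PLift (p = q)) := ⟨fun x => hP x.down⟩; simp

end Helpers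



section Main

open Function UDData

variable {C : UDData}

lemma my_nAut_eq_one (h : C.IsUpdown) (hu : C.Univalent) (p : C.Obj) : C.nAut p = 1 := by
  haveI := h.hom_finite p p
  haveI := hu p
  haveI : Unique (C.Hom p p) := uniqueOfSubsingleton (C.idm p)
  simp [UDData.nAut]

lemma my_uStep_eq (h : C.IsUpdown) (hu : C.Univalent) (p q : C.Obj) :
    C.uStep p q = if C.rank q = C.rank p + 1 then Nat.card (C.Hom p q) else 0 := by
  unfold UDData.uStep UDData.u
  rw [my_nAut_eq_one h hu]
  simp

lemma my_dStep_eq_uStep (h : C.IsUpdown) (hu : C.Univalent) (p q : C.Obj) :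
    C.dStep p q = C.uStep p q := by
  unfold UDData.dStep UDData.uStep UDData.u UDData.d
  rw [my_nAut_eq_one h hu, my_nAut_eq_one h hu]

lemma my_chain_succ_def (n : ℕ) (p q : C.Obj) :
    C.Chain (n + 1) p q =
      ((r : C.Obj) × (C.Chain n p r × {f : C.Hom r q // C.rank q = C.rank r + 1})) := rfl

lemma my_chain_rank : ∀ (n : ℕ) {p q : C.Obj}, C.Chain n p q → C.rank q = C.rank p + n := by
  intro n
  induction n with
  | zero => intro p q c; rw [← c.down]; rfl
  | succ n ih =>
    intro p q c
    rw [my_chain_succ_def] at c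
    obtain ⟨r, c', f⟩ := c
    rw [f.2, ih c']; omega

lemma my_chain_finite (h : C.IsUpdown) : ∀ (n : ℕ) (p q : C.Obj), Finite (C.Chain n p q) := by
  intro n
  induction n with
  | zero =>
    intro p q
    exact inferInstanceAs (Finite (PLift (p = q)))
  | succ n ih =>
    intro p q
    haveI := fun r => ih p r
    haveI := fun r => h.hom_finite r q
    rw [my_chain_succ_def]
    refine my_finite_sigma _ ((h.rank_finite (C.rank q - 1)).subset ?_)
    rintro r ⟨c, f, hf⟩
    simp only [Set.mem_setOf_eq]
    omega

lemma my_chain_card_succ (h : C.IsUpdown) (hu : C.Univalent) (n : ℕ) (p q : C.Obj) :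
    Nat.card (C.Chain (n + 1) p q) = ∑ᶠ r, Nat.card (C.Chain n p r) * C.uStep r q := by
  haveI := fun r => my_chain_finite h n p r
  haveI := fun r => h.hom_finite r q
  rw [my_chain_succ_def]
  rw [my_card_sigma_finsum _ ((h.rank_finite (C.rank q - 1)).subset ?_)]
  · refine finsum_congr fun r => ?_
    rw [Nat.card_prod, my_card_subtype_prop, my_uStep_eq h hu]
    congr
  · rintro r ⟨c, f, hf⟩
    simp only [Set.mem_setOf_eq]
    omega

lemma my_chain_card (h : C.IsUpdown) (hu : C.Univalent) :
    ∀ (n : ℕ) (p q : C.Obj), Nat.card (C.Chain n p q) = C.uext n p q := by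
  intro n
  induction n with
  | zero =>
    intro p q
    simp only [UDData.uext]
    exact my_card_plift_eq p q
  | succ n ih =>
    intro p q
    rw [my_chain_card_succ h hu]
    simp only [UDData.uext]
    exact finsum_congr fun r => by rw [ih]

lemma my_coverCard_eq (h : C.IsUpdown) (n : ℕ) :
    C.coverCard n = ∑ᶠ q, Nat.card (C.Chain n C.zhat q) := by
  haveI := fun q => my_chain_finite h n C.zhat q
  refine my_card_sigma_finsum _ ((h.rank_finite n).subset ?_)
  rintro q ⟨c⟩
  have := my_chain_rank n c
  simp only [Set.mem_setOf_eq]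
  rw [this, h.rank_zhat]
  omega

end Main

lemma my_dStep_rank {C : UDData} {r p : C.Obj} (hr : C.dStep r p ≠ 0) :
    C.rank p = C.rank r + 1 := by
  by_contra hc
  exact hr (by simp [UDData.dStep, hc])

lemma my_uStep_rank {C : UDData} {r p : C.Obj} (hr : C.uStep r p ≠ 0) :
    C.rank p = C.rank r + 1 := by
  by_contra hc
  exact hr (by simp [UDData.uStep, hc])

lemma my_factorial_chain {C : UDData} (h : C.IsUpdown) (hu : C.Univalent)
    (hf : C.Factorial) :
    ∀ (n : ℕ) (p : C.Obj), C.rank p = n → Nat.card (C.Chain n C.zhat p) = n.factorial := by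
  classical
  intro n
  induction n with
  | zero =>
    intro p hp
    rw [h.zhat_unique p hp]
    have : Nat.card (C.Chain 0 C.zhat C.zhat) = if C.zhat = C.zhat then 1 else 0 :=
      my_card_plift_eq C.zhat C.zhat
    rw [this]
    simp
  | succ n ih =>
    intro p hp
    rw [my_chain_card_succ h hu]
    have hsupp : (Function.support fun r => C.dStep r p).Finite := by
      refine (h.rank_finite n).subset ?_
      intro r hr
      simp only [Function.mem_support] at hr
      have := my_dStep_rank hr
      simp only [Set.mem_setOf_eq]
      omega
    calc (∑ᶠ r, Nat.card (C.Chain n C.zhat r) * C.uStep r p)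
        = ∑ᶠ r, n.factorial * C.dStep r p := by
          refine finsum_congr fun r => ?_
          rw [← my_dStep_eq_uStep h hu]
          by_cases hr : C.dStep r p = 0
          · rw [hr, mul_zero, mul_zero]
          · have hrk : C.rank r = n := by have := my_dStep_rank hr; omega
            rw [ih r hrk]
      _ = n.factorial * ∑ᶠ r, C.dStep r p := (mul_finsum _ _).symm
      _ = (n + 1).factorial := by
            rw [hf p, hp, Nat.factorial_succ]; ring

lemma my_chain_empty {C : UDData} (h : C.IsUpdown) {n : ℕ} {q : C.Obj}
    (hq : C.rank q ≠ n) : Nat.card (C.Chain n C.zhat q) = 0 := by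
  haveI := my_chain_finite h n C.zhat q
  haveI : IsEmpty (C.Chain n C.zhat q) := by
    refine ⟨fun c => hq ?_⟩
    have := my_chain_rank n c
    rw [this, h.rank_zhat]
    omega
  simp

theorem universal_cover_fibers (C : UDData) (h : C.IsUpdown) (hu : C.Univalent) :
    (∀ p : C.Obj, Nat.card (C.Chain (C.rank p) C.zhat p) = C.uE C.zhat p) ∧
    (∀ n : ℕ, C.coverCard n = ∑ᶠ p : C.Obj, if C.rank p = n then C.uE C.zhat p else 0) ∧
    (C.Factorial →
      (∀ p : C.Obj, Nat.card (C.Chain (C.rank p) C.zhat p) = (C.rank p).factorial) ∧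
      (∀ n : ℕ, C.coverCard n = n.factorial * Nat.card {p : C.Obj // C.rank p = n})) ∧
    (∀ u : ℕ → ℕ, C.EUC u → ∀ n : ℕ, C.coverCard n = ∏ i ∈ Finset.range n, u i) := by
  classical
  have part1 : ∀ p : C.Obj, Nat.card (C.Chain (C.rank p) C.zhat p) = C.uE C.zhat p := by
    intro p
    unfold UDData.uE
    rw [h.rank_zhat, Nat.sub_zero]
    exact my_chain_card h hu _ _ _
  refine ⟨part1, ?_, ?_, ?_⟩
  · -- part 2
    intro n
    rw [my_coverCard_eq h n]
    refine finsum_congr fun q => ?_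
    by_cases hq : C.rank q = n
    · rw [if_pos hq, ← part1 q, hq]
    · rw [if_neg hq, my_chain_empty h hq]
  · -- part 3
    intro hf
    have key := my_factorial_chain h hu hf
    refine ⟨fun p => key (C.rank p) p rfl, fun n => ?_⟩
    rw [my_coverCard_eq h n]
    have h1 : (∑ᶠ q, Nat.card (C.Chain n C.zhat q)) =
        ∑ᶠ q : C.Obj, if C.rank q = n then n.factorial else 0 := by
      refine finsum_congr fun q => ?_
      by_cases hq : C.rank q = n
      · rw [if_pos hq, key n q hq]
      · rw [if_neg hq, my_chain_empty h hq]
    rw [h1]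
    set s : Finset C.Obj := (h.rank_finite n).toFinset with hs
    have h2 : (∑ᶠ q : C.Obj, if C.rank q = n then n.factorial else 0) =
        ∑ q ∈ s, if C.rank q = n then n.factorial else 0 := by
      refine finsum_eq_finset_sum_of_support_subset _ ?_
      intro q hq
      simp only [Function.mem_support, ne_eq, ite_eq_right_iff, not_forall] at hq
      simp [hs, Set.Finite.mem_toFinset, hq.1]
    rw [h2]
    have h3 : (∑ q ∈ s, if C.rank q = n then n.factorial else 0) = s.card * n.factorial := by
      rw [Finset.sum_congr rfl (fun q hq => if_pos (by
        simpa [hs, Set.Finite.mem_toFinset] using hq))]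
      simp [mul_comm]
    rw [h3]
    have h4 : Nat.card {p : C.Obj // C.rank p = n} = s.card :=
      Nat.card_eq_card_finite_toFinset (h.rank_finite n)
    rw [h4]
    exact Nat.mul_comm _ _
  · -- part 4
    intro u hEUC n
    induction n with
    | zero =>
      rw [my_coverCard_eq h 0]
      have h1 : (∑ᶠ q, Nat.card (C.Chain 0 C.zhat q)) =
          ∑ᶠ q : C.Obj, if C.zhat = q then 1 else 0 :=
        finsum_congr fun q => my_card_plift_eq C.zhat q
      rw [h1, finsum_eq_single _ C.zhat (fun q hq => if_neg (fun e => hq e.symm))]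
      simp
    | succ n ih =>
      have key : C.coverCard (n + 1) = ∑ᶠ r, Nat.card (C.Chain n C.zhat r) * (u n) := by
        unfold UDData.coverCard
        have e : ((q : C.Obj) × C.Chain (n + 1) C.zhat q) ≃
            ((r : C.Obj) × (C.Chain n C.zhat r ×
              ((q : C.Obj) × {f : C.Hom r q // C.rank q = C.rank r + 1}))) :=
          { toFun := fun x => ⟨x.2.1, x.2.2.1, ⟨x.1, x.2.2.2⟩⟩
            invFun := fun y => ⟨y.2.2.1, y.1, y.2.1, y.2.2.2⟩
            left_inv := fun x => rfl
            right_inv := fun y => rfl }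
        rw [Nat.card_congr e]
        haveI hc := fun r => my_chain_finite h n C.zhat r
        haveI := fun r q => h.hom_finite r q
        have hfin : ∀ r : C.Obj,
            Finite ((q : C.Obj) × {f : C.Hom r q // C.rank q = C.rank r + 1}) := by
          intro r
          refine my_finite_sigma _ ((h.rank_finite (C.rank r + 1)).subset ?_)
          rintro q ⟨f, hf⟩
          exact hf
        haveI := hfin
        rw [my_card_sigma_finsum _ ((h.rank_finite n).subset ?_)]
        · refine finsum_congr fun r => ?_
          rw [Nat.card_prod]
          by_cases hr : Nat.card (C.Chain n C.zhat r) = 0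
          · rw [hr, zero_mul, zero_mul]
          · have hrk : C.rank r = n := by
              have hne : Nonempty (C.Chain n C.zhat r) := Nat.card_ne_zero.mp hr |>.1
              have := my_chain_rank n hne.some
              rw [h.rank_zhat] at this
              omega
            congr 1
            have h5 : Nat.card ((q : C.Obj) × {f : C.Hom r q // C.rank q = C.rank r + 1}) =
                ∑ᶠ q, C.uStep r q := by
              rw [my_card_sigma_finsum _ ((h.rank_finite (C.rank r + 1)).subset ?_)]
              · refine finsum_congr fun q => ?_
                rw [my_card_subtype_prop, my_uStep_eq h hu]
                congr
              · rintro q ⟨f, hf⟩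
                exact hf
            rw [h5, hEUC r, hrk]
        · rintro r ⟨c, x⟩
          have := my_chain_rank n c
          rw [h.rank_zhat] at this
          simp only [Set.mem_setOf_eq]
          omega
      have hsupp : (Function.support fun r => Nat.card (C.Chain n C.zhat r)).Finite := by
        refine (h.rank_finite n).subset ?_
        intro r hr
        simp only [Function.mem_support] at hr
        have hne : Nonempty (C.Chain n C.zhat r) := Nat.card_ne_zero.mp hr |>.1
        have := my_chain_rank n hne.some
        rw [h.rank_zhat] at this
        simp only [Set.mem_setOf_eq]
        omega
      rw [key, ← finsum_mul _ _, ← my_coverCard_eq h n, ih, Finset.prod_range_succ]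
end

section
/- If C and D are univalent updown categories, then the number of rank-n objects in the universal cover of C × D is Σ_{k=0}^{n} C(n,k)·|C̃_k|·|D̃_{n−k}|, where C̃ and D̃ are the universal covers of C and D. -/
namespace ProdCover
open UDData
def chain0 (C : UDData) {p q : C.Obj} (h : p = q) : C.Chain 0 p q := PLift.up h
def chain0_down (C : UDData) {p q : C.Obj} (c : C.Chain 0 p q) : p = q := c.down

instance (C : UDData) (p q : C.Obj) : Subsingleton (C.Chain 0 p q) :=
  inferInstanceAs (Subsingleton (PLift (p = q)))

def DStp (C : UDData) (q : C.Obj) : Type :=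
  (r : C.Obj) × {f : C.Hom r q // C.rank q = C.rank r + 1}

def chainSuccEquiv (C : UDData) (p q : C.Obj) (n : ℕ) :
    C.Chain (n+1) p q ≃ (s : DStp C q) × C.Chain n p s.1 where
  toFun x := ⟨⟨x.1, x.2.2⟩, x.2.1⟩
  invFun y := ⟨y.1.1, y.2, y.1.2⟩
  left_inv := fun ⟨_, _, _⟩ => rfl
  right_inv := fun ⟨⟨_, _⟩, _⟩ => rfl

def chCast (C : UDData) {m m' : ℕ} (h : m = m') (p q : C.Obj) :
    C.Chain m p q ≃ C.Chain m' p q := Equiv.cast (by rw [h])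

open Classical in
noncomputable def dstpProdEquiv (C D : UDData) (hC : C.IsUpdown) (hD : D.IsUpdown)
    (hCu : C.Univalent) (hDu : D.Univalent) (p : C.Obj) (q : D.Obj) :
    DStp (C.prod D) (p, q) ≃ DStp C p ⊕ DStp D q where
  toFun x :=
    if e : x.1.1 = p then
      Sum.inr ⟨x.1.2, x.2.1.2, by
        have h := x.2.2
        have : C.rank p + D.rank q = C.rank x.1.1 + D.rank x.1.2 + 1 := h
        rw [e] at this; omega⟩
    else
      Sum.inl ⟨x.1.1, x.2.1.1, by
        have h : C.rank p + D.rank q = C.rank x.1.1 + D.rank x.1.2 + 1 := x.2.2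
        have h1 : C.rank x.1.1 < C.rank p := by
          rcases hC.hom_rank _ _ ⟨x.2.1.1⟩ with h' | h'
          · exact h'
          · exact absurd h' e
        rcases hD.hom_rank _ _ ⟨x.2.1.2⟩ with h' | h'
        · have h2 : D.rank x.1.2 < D.rank q := h'
          omega
        · have h2 : x.1.2 = q := h'
          rw [h2] at h; omega⟩
  invFun t :=
    t.elim
      (fun s => ⟨(s.1, q), (s.2.1, D.idm q), by
        have h := s.2.2
        show C.rank p + D.rank q = C.rank s.1 + D.rank q + 1; omega⟩)
      (fun s => ⟨(p, s.1), (C.idm p, s.2.1), by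
        have h := s.2.2
        show C.rank p + D.rank q = C.rank p + D.rank s.1 + 1; omega⟩)
  left_inv := by
    rintro ⟨⟨r1, r2⟩, ⟨f1, f2⟩, h⟩
    dsimp only
    by_cases e : r1 = p
    · subst e
      rw [dif_pos rfl]
      exact Sigma.ext rfl (heq_of_eq (Subtype.ext (Prod.ext (@Subsingleton.elim _ (hCu r1) _ _) rfl)))
    · rw [dif_neg e]
      have h' : C.rank p + D.rank q = C.rank r1 + D.rank r2 + 1 := h
      have h2 : r2 = q := by
        have h1 : C.rank r1 < C.rank p := by
          rcases hC.hom_rank _ _ ⟨f1⟩ with h'' | h''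
          · exact h''
          · exact absurd h'' e
        rcases hD.hom_rank _ _ ⟨f2⟩ with h'' | h''
        · have h3 : D.rank r2 < D.rank q := h''
          have h4 : C.rank p + D.rank q = C.rank r1 + D.rank r2 + 1 := h
          omega
        · exact h''
      subst h2
      exact Sigma.ext rfl (heq_of_eq (Subtype.ext (Prod.ext rfl (@Subsingleton.elim _ (hDu r2) _ _))))
  right_inv := by
    rintro (⟨r1, f1, h1⟩ | ⟨r2, f2, h2⟩)
    · have e : ¬ (r1 = p) := by intro e; rw [e] at h1; omega
      dsimp only [Sum.elim_inl]
      exact dif_neg e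
    · dsimp only [Sum.elim_inr]
      exact dif_pos rfl

def cnt {n : ℕ} (w : Fin n → Bool) : ℕ := ∑ i, if w i then 1 else 0

lemma cnt_zero (w : Fin 0 → Bool) : cnt w = 0 := by simp [cnt]

lemma cnt_le {n : ℕ} (w : Fin n → Bool) : cnt w ≤ n := by
  calc cnt w ≤ ∑ _i : Fin n, 1 :=
        Finset.sum_le_sum (fun i _ => by by_cases h : w i <;> simp [h])
    _ = n := by simp

lemma cnt_cons {n : ℕ} (b : Bool) (w : Fin n → Bool) :
    cnt (Fin.cons b w) = (if b then 1 else 0) + cnt w := by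
  unfold cnt
  rw [Fin.sum_univ_succ, Fin.cons_zero]
  simp only [Fin.cons_succ]

def regroup {A W : Type} {F : A → W → Type} {Y : W → Type} :
    ((s : A) × (w : W) × (F s w × Y w)) ≃ (w : W) × (((s : A) × F s w) × Y w) where
  toFun x := ⟨x.2.1, ⟨x.1, x.2.2.1⟩, x.2.2.2⟩
  invFun y := ⟨y.2.1.1, y.1, y.2.1.2, y.2.2⟩
  left_inv := fun ⟨_, _, _, _⟩ => rfl
  right_inv := fun ⟨_, ⟨_, _⟩, _⟩ => rfl

def regroup2 {A W : Type} {X : W → Type} {G : A → W → Type} :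
    ((s : A) × (w : W) × (X w × G s w)) ≃ (w : W) × (X w × ((s : A) × G s w)) where
  toFun x := ⟨x.2.1, x.2.2.1, ⟨x.1, x.2.2.2⟩⟩
  invFun y := ⟨y.2.2.1, y.1, y.2.1, y.2.2.2⟩
  left_inv := fun ⟨_, _, _, _⟩ => rfl
  right_inv := fun ⟨_, _, _, _⟩ => rfl

def sigmaBoolEquiv {F : Bool → Type} : ((b : Bool) × F b) ≃ F true ⊕ F false where
  toFun x :=
    match x with
    | ⟨true, y⟩ => Sum.inl y
    | ⟨false, y⟩ => Sum.inr y
  invFun t := t.elim (fun y => ⟨true, y⟩) (fun y => ⟨false, y⟩)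
  left_inv := by rintro ⟨(_|_), y⟩ <;> rfl
  right_inv := by rintro (y | y) <;> rfl

def sigmaProdEquiv {A B : Type} {F : A × B → Type} :
    ((x : A × B) × F x) ≃ (a : A) × (b : B) × F (a, b) where
  toFun x := ⟨x.1.1, x.1.2, x.2⟩
  invFun y := ⟨(y.1, y.2.1), y.2.2⟩
  left_inv := fun ⟨⟨_, _⟩, _⟩ => rfl
  right_inv := fun ⟨_, _, _⟩ => rfl

def sigmaSumSplit {A B : Type} {F : A ⊕ B → Type} :
    ((t : A ⊕ B) × F t) ≃ ((a : A) × F (Sum.inl a)) ⊕ ((b : B) × F (Sum.inr b)) where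
  toFun x :=
    match x with
    | ⟨Sum.inl a, y⟩ => Sum.inl ⟨a, y⟩
    | ⟨Sum.inr b, y⟩ => Sum.inr ⟨b, y⟩
  invFun t := t.elim (fun z => ⟨Sum.inl z.1, z.2⟩) (fun z => ⟨Sum.inr z.1, z.2⟩)
  left_inv := by rintro ⟨(a | b), y⟩ <;> rfl
  right_inv := by rintro (⟨a, y⟩ | ⟨b, y⟩) <;> rfl

noncomputable def mainEquiv (C D : UDData) (hC : C.IsUpdown) (hD : D.IsUpdown)
    (hCu : C.Univalent) (hDu : D.Univalent) :
    (n : ℕ) → (p : C.Obj) → (q : D.Obj) →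
    ((C.prod D).Chain n (C.prod D).zhat (p, q) ≃
      (w : Fin n → Bool) × (C.Chain (cnt w) C.zhat p × D.Chain (n - cnt w) D.zhat q))
  | 0, p, q =>
    { toFun := fun h => ⟨fun i => i.elim0,
        (chCast C (cnt_zero _).symm C.zhat p) (chain0 C (congrArg Prod.fst h.down)),
        (chCast D (by rw [cnt_zero]) D.zhat q) (chain0 D (congrArg Prod.snd h.down))⟩
      invFun := fun y => PLift.up (by
        have h1 := chain0_down C ((chCast C (cnt_zero y.1) C.zhat p) y.2.1)
        have h2 := chain0_down D ((chCast D (by rw [cnt_zero y.1]) D.zhat q) y.2.2)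
        exact Prod.ext h1 h2)
      left_inv := fun x => @Subsingleton.elim _
          (inferInstanceAs (Subsingleton (PLift ((C.prod D).zhat = ((p, q) : (C.prod D).Obj))))) _ _
      right_inv := by
        have hs : Subsingleton ((w : Fin 0 → Bool) ×
            (C.Chain (cnt w) C.zhat p × D.Chain (0 - cnt w) D.zhat q)) := by
          constructor
          rintro ⟨w, x⟩ ⟨w', x'⟩
          obtain rfl : w = w' := Subsingleton.elim _ _
          refine congrArg _ ?_
          have hss : Subsingleton (C.Chain (cnt w) C.zhat p × D.Chain (0 - cnt w) D.zhat q) := by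
            rw [cnt_zero w]
            simp only [Nat.sub_zero]
            infer_instance
          exact hss.elim x x'
        exact fun y => hs.elim _ _
      }
  | (n+1), p, q =>
    (chainSuccEquiv (C.prod D) (C.prod D).zhat (p, q) n).trans <|
    ((Equiv.sigmaCongrLeft (β := fun s : DStp (C.prod D) (p,q) =>
        (C.prod D).Chain n (C.prod D).zhat s.1)
        (dstpProdEquiv C D hC hD hCu hDu p q).symm).symm).trans <|
    (Equiv.sigmaCongrRight (fun t => Equiv.cast (congrArg
        (fun z : (C.prod D).Obj => (C.prod D).Chain n (C.prod D).zhat z)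
        (show ((dstpProdEquiv C D hC hD hCu hDu p q).symm t).1 =
            Sum.elim (fun s : DStp C p => ((s.1 : C.Obj), q))
              (fun s : DStp D q => (p, (s.1 : D.Obj))) t from
          by rcases t with s | s <;> rfl)))).trans <|
    sigmaSumSplit.trans <|
    (Equiv.sumCongr
      -- left: last step in C
      ((Equiv.sigmaCongrRight (fun s : DStp C p => mainEquiv C D hC hD hCu hDu n s.1 q)).trans <|
        regroup.trans <|
        Equiv.sigmaCongrRight (fun w => Equiv.prodCongr
          (chainSuccEquiv C C.zhat p (cnt w)).symm (Equiv.refl _)))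
      -- right: last step in D
      ((Equiv.sigmaCongrRight (fun s : DStp D q => mainEquiv C D hC hD hCu hDu n p s.1)).trans <|
        regroup2.trans <|
        Equiv.sigmaCongrRight (fun w => Equiv.prodCongr (Equiv.refl _)
          (chainSuccEquiv D D.zhat q (n - cnt w)).symm))).trans <|
    -- now : (Σ w, C.Chain (cnt w + 1) × D.Chain (n - cnt w)) ⊕ (Σ w, C.Chain (cnt w) × D.Chain (n - cnt w + 1))
    (Equiv.sumCongr
      (Equiv.sigmaCongrRight (fun w : Fin n → Bool => Equiv.prodCongr
        (chCast C (show cnt w + 1 = cnt (Fin.cons true w) by simp [cnt_cons]; omega) C.zhat p)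
        (chCast D (show n - cnt w = n + 1 - cnt (Fin.cons true w) by
            simp [cnt_cons]; omega) D.zhat q)))
      (Equiv.sigmaCongrRight (fun w : Fin n → Bool => Equiv.prodCongr
        (chCast C (show cnt w = cnt (Fin.cons false w) by simp [cnt_cons]) C.zhat p)
        (chCast D (show n - cnt w + 1 = n + 1 - cnt (Fin.cons false w) by
            have := cnt_le w; simp [cnt_cons]; omega) D.zhat q)))).trans <|
    (sigmaBoolEquiv (F := fun b => (w : Fin n → Bool) ×
        (C.Chain (cnt (Fin.cons b w)) C.zhat p ×
          D.Chain (n + 1 - cnt (Fin.cons b w)) D.zhat q))).symm.trans <|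
    sigmaProdEquiv.symm.trans <|
    (Equiv.sigmaCongrLeft (β := fun w : Fin (n+1) → Bool =>
        (C.Chain (cnt w) C.zhat p × D.Chain (n + 1 - cnt w) D.zhat q))
      (Fin.consEquiv (fun _ => Bool)))

def tcSuccEquiv (C : UDData) (p : C.Obj) (n : ℕ) :
    ((q : C.Obj) × C.Chain (n+1) p q) ≃
      (x : (r : C.Obj) × C.Chain n p r) ×
        ((q : C.Obj) × {f : C.Hom x.1 q // C.rank q = C.rank x.1 + 1}) where
  toFun z := ⟨⟨z.2.1, z.2.2.1⟩, ⟨z.1, z.2.2.2⟩⟩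
  invFun y := ⟨y.2.1, y.1.1, y.1.2, y.2.2⟩
  left_inv := fun ⟨_, _, _, _⟩ => rfl
  right_inv := fun ⟨⟨_, _⟩, ⟨_, _⟩⟩ => rfl

def ustEquiv (C : UDData) (r : C.Obj) :
    ((q : C.Obj) × {f : C.Hom r q // C.rank q = C.rank r + 1}) ≃
      ((q : {q : C.Obj // C.rank q = C.rank r + 1}) × C.Hom r q.1) where
  toFun z := ⟨⟨z.1, z.2.2⟩, z.2.1⟩
  invFun y := ⟨y.1.1, y.2, y.1.2⟩
  left_inv := fun ⟨_, _, _⟩ => rfl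
  right_inv := fun ⟨⟨_, _⟩, _⟩ => rfl

lemma finite_ust (C : UDData) (hC : C.IsUpdown) (r : C.Obj) :
    Finite ((q : C.Obj) × {f : C.Hom r q // C.rank q = C.rank r + 1}) := by
  haveI : Finite {q : C.Obj // C.rank q = C.rank r + 1} :=
    (hC.rank_finite (C.rank r + 1)).to_subtype
  haveI : ∀ q : {q : C.Obj // C.rank q = C.rank r + 1}, Finite (C.Hom r q.1) :=
    fun q => hC.hom_finite r q.1
  exact Finite.of_equiv _ (ustEquiv C r).symm

lemma finite_tc (C : UDData) (hC : C.IsUpdown) : ∀ (n : ℕ) (p : C.Obj),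
    Finite ((q : C.Obj) × C.Chain n p q)
  | 0, p => by
    haveI : Subsingleton ((q : C.Obj) × C.Chain 0 p q) := by
      constructor
      rintro ⟨q, c⟩ ⟨q', c'⟩
      obtain rfl : p = q := chain0_down C c
      obtain rfl : p = q' := chain0_down C c'
      exact congrArg _ (Subsingleton.elim _ _)
    exact Finite.of_subsingleton
  | (n+1), p => by
    haveI := finite_tc C hC n p
    haveI := fun (x : (r : C.Obj) × C.Chain n p r) => finite_ust C hC x.1
    exact Finite.of_equiv _ (tcSuccEquiv C p n).symm

lemma nat_card_sigma {ι : Type} [Fintype ι] (F : ι → Type) [hF : ∀ i, Finite (F i)] :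
    Nat.card ((i : ι) × F i) = ∑ i, Nat.card (F i) := by
  letI : ∀ i, Fintype (F i) := fun i => Fintype.ofFinite _
  rw [Nat.card_eq_fintype_card, Fintype.card_sigma]
  exact Finset.sum_congr rfl fun i _ => (Nat.card_eq_fintype_card).symm

def regroup3 {A B W : Type} {F : A → W → Type} {G : B → W → Type} :
    ((a : A) × (b : B) × (w : W) × (F a w × G b w)) ≃
      (w : W) × (((a : A) × F a w) × ((b : B) × G b w)) where
  toFun x := ⟨x.2.2.1, ⟨x.1, x.2.2.2.1⟩, ⟨x.2.1, x.2.2.2.2⟩⟩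
  invFun y := ⟨y.2.1.1, y.2.2.1, y.1, y.2.1.2, y.2.2.2⟩
  left_inv := fun ⟨_, _, _, _, _⟩ => rfl
  right_inv := fun ⟨_, ⟨_, _⟩, ⟨_, _⟩⟩ => rfl

/-- The global bijection behind the theorem. -/
noncomputable def coverEquiv (C D : UDData) (hC : C.IsUpdown) (hD : D.IsUpdown)
    (hCu : C.Univalent) (hDu : D.Univalent) (n : ℕ) :
    ((pq : (C.prod D).Obj) × (C.prod D).Chain n (C.prod D).zhat pq) ≃
      (w : Fin n → Bool) ×
        (((p : C.Obj) × C.Chain (cnt w) C.zhat p) ×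
         ((q : D.Obj) × D.Chain (n - cnt w) D.zhat q)) :=
  (sigmaProdEquiv (A := C.Obj) (B := D.Obj)
      (F := fun pq => (C.prod D).Chain n (C.prod D).zhat pq)).trans <|
  (Equiv.sigmaCongrRight (fun p => Equiv.sigmaCongrRight (fun q =>
      mainEquiv C D hC hD hCu hDu n p q))).trans <|
  regroup3

open Classical in
lemma card_cnt (n k : ℕ) :
    (Finset.univ.filter fun w : Fin n → Bool => cnt w = k).card = n.choose k := by
  rw [← Fintype.card_subtype]
  have e : {w : Fin n → Bool // cnt w = k} ≃ {s : Finset (Fin n) // s.card = k} :=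
    { toFun := fun x => ⟨Finset.univ.filter (fun i => x.1 i = true), by
        rw [Finset.card_filter]; exact x.2⟩
      invFun := fun s => ⟨fun i => decide (i ∈ s.1), by
        have : cnt (fun i => decide (i ∈ s.1)) = s.1.card := by
          unfold cnt
          simp only [decide_eq_true_eq]
          rw [← Finset.card_filter, Finset.filter_univ_mem]
        rw [this]; exact s.2⟩
      left_inv := fun x => by
        apply Subtype.ext; funext i
        simp [Finset.mem_filter]
      right_inv := fun s => by
        apply Subtype.ext
        ext i
        simp [Finset.mem_filter] }
  rw [Fintype.card_congr e, Fintype.card_finset_len, Fintype.card_fin]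

end ProdCover

open ProdCover

theorem prod_universal_cover_card (C D : UDData) (hC : C.IsUpdown) (hD : D.IsUpdown)
    (hCu : C.Univalent) (hDu : D.Univalent) (n : ℕ) :
    (C.prod D).coverCard n =
      ∑ k ∈ Finset.range (n + 1), n.choose k * C.coverCard k * D.coverCard (n - k) := by
  classical
  have h1 : (C.prod D).coverCard n = Nat.card
      ((w : Fin n → Bool) ×
        (((p : C.Obj) × C.Chain (cnt w) C.zhat p) ×
         ((q : D.Obj) × D.Chain (n - cnt w) D.zhat q))) :=
    Nat.card_congr (coverEquiv C D hC hD hCu hDu n)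
  haveI : ∀ w : Fin n → Bool,
      Finite ((((p : C.Obj) × C.Chain (cnt w) C.zhat p) ×
         ((q : D.Obj) × D.Chain (n - cnt w) D.zhat q))) := fun w => by
    haveI := finite_tc C hC (cnt w) C.zhat
    haveI := finite_tc D hD (n - cnt w) D.zhat
    infer_instance
  rw [h1, nat_card_sigma]
  have hterm : ∀ w : Fin n → Bool,
      Nat.card (((p : C.Obj) × C.Chain (cnt w) C.zhat p) ×
         ((q : D.Obj) × D.Chain (n - cnt w) D.zhat q)) =
      C.coverCard (cnt w) * D.coverCard (n - cnt w) := fun w => by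
    rw [Nat.card_prod]; rfl
  rw [Finset.sum_congr rfl fun w _ => hterm w]
  rw [← Finset.sum_fiberwise_of_maps_to (t := Finset.range (n+1)) (g := cnt)
    (fun w _ => Finset.mem_range.mpr (Nat.lt_succ_of_le (cnt_le w)))
    (fun w => C.coverCard (cnt w) * D.coverCard (n - cnt w))]
  refine Finset.sum_congr rfl fun k _ => ?_
  have : ∀ w ∈ Finset.univ.filter (fun w : Fin n → Bool => cnt w = k),
      C.coverCard (cnt w) * D.coverCard (n - cnt w) =
      C.coverCard k * D.coverCard (n - k) := fun w hw => by
    rw [(Finset.mem_filter.mp hw).2]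
  rw [Finset.sum_congr rfl this, Finset.sum_const, card_cnt, smul_eq_mul, mul_assoc]
end
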